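/- arXiv:2605.01192 — 2 statements merged into one kernel-verified Lean document; each statement's English description precedes it below -/
import Mathlib

section
/- Let F > d ≥ 1, Ψ ∈ ℝ^{d×F}, G ∈ ℝ^{F×d}, M = GΨ with all diagonal entries equal to 1. Then the average squared off-diagonal entry (1/(F(F−1)))·∑_{i≠j} |M_{ij}|² is at least (F−d)/(d(F−1)), and consequently max_{i≠j} |M_{ij}| ≥ √((F−d)/(d(F−1))). -/
open Finset Matrix

theorem rank_trace_bound (F d : ℕ) (G : Matrix (Fin F) (Fin d) ℝ)
    (Ψ : Matrix (Fin d) (Fin F) ℝ) :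
    (∑ i, (G * Ψ) i i) ^ 2 ≤ (d : ℝ) * ∑ i, ∑ j, ((G * Ψ) i j) ^ 2 := by
  classical
  set M := G * Ψ with hMdef
  let L : EuclideanSpace ℝ (Fin d) →ₗ[ℝ] EuclideanSpace ℝ (Fin F) :=
    (WithLp.linearEquiv 2 ℝ (Fin F → ℝ)).symm.toLinearMap ∘ₗ G.mulVecLin ∘ₗ
      (WithLp.linearEquiv 2 ℝ (Fin d → ℝ)).toLinearMap
  let V := LinearMap.range L
  let p : EuclideanSpace ℝ (Fin F) →ₗ[ℝ] EuclideanSpace ℝ (Fin F) :=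
    V.subtype ∘ₗ (Submodule.orthogonalProjectionOnto V).toLinearMap
  have hpmem : ∀ x, p x ∈ V := fun x => (Submodule.orthogonalProjectionOnto V x).2
  have hpid : ∀ x ∈ V, p x = x := by
    intro x hx
    show ((Submodule.orthogonalProjectionOnto V x : V) : EuclideanSpace ℝ (Fin F)) = x
    rw [show x = ((⟨x, hx⟩ : V) : EuclideanSpace ℝ (Fin F)) from rfl,
      Submodule.orthogonalProjectionOnto_mem_subspace_eq_self]
  have hproj : LinearMap.IsProj V p := ⟨hpmem, hpid⟩
  let P : Matrix (Fin F) (Fin F) ℝ := fun i j => p (EuclideanSpace.single j 1) i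
  have hdec : ∀ x : EuclideanSpace ℝ (Fin F), x = ∑ k, x k • EuclideanSpace.single k 1 := by
    intro x
    have := (EuclideanSpace.basisFun (Fin F) ℝ).sum_repr x
    simpa using this.symm
  have hPapp : ∀ (x : EuclideanSpace ℝ (Fin F)) (i : Fin F),
      p x i = ∑ k, P i k * x k := by
    intro x i
    conv_lhs => rw [hdec x]
    rw [map_sum]
    simp only [LinearMap.map_smul]
    have : (∑ k, x k • p (EuclideanSpace.single k 1)) i
        = ∑ k, x k * p (EuclideanSpace.single k 1) i := by
      rw [WithLp.ofLp_sum, Finset.sum_apply]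
      rfl
    rw [this]
    exact Finset.sum_congr rfl fun k _ => mul_comm _ _
  -- trace of P equals finrank V
  have htr : ∑ i, P i i = (Module.finrank ℝ V : ℝ) := by
    have h1 := hproj.trace
    have h2 := LinearMap.trace_eq_matrix_trace ℝ
      (EuclideanSpace.basisFun (Fin F) ℝ).toBasis p
    rw [h2] at h1
    rw [← h1]
    unfold Matrix.trace
    apply Finset.sum_congr rfl
    intro i _
    simp [LinearMap.toMatrix_apply, Matrix.diag, P]
  have hrank : (Module.finrank ℝ V : ℝ) ≤ (d : ℝ) := by
    have h1 : Module.finrank ℝ V ≤ Module.finrank ℝ (EuclideanSpace ℝ (Fin d)) :=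
      LinearMap.finrank_range_le L
    rw [finrank_euclideanSpace_fin] at h1
    exact_mod_cast h1
  -- sum of squares of P equals trace of P
  have hPsq : ∑ i, ∑ j, P i j ^ 2 = ∑ i, P i i := by
    rw [Finset.sum_comm]
    apply Finset.sum_congr rfl
    intro j _
    have e1 : ∑ i, P i j ^ 2
        = (inner ℝ (p (EuclideanSpace.single j 1)) (p (EuclideanSpace.single j 1)) : ℝ) := by
      rw [PiLp.inner_apply]
      apply Finset.sum_congr rfl
      intro i _
      simp [P, sq]
    have e2 : (inner ℝ (p (EuclideanSpace.single j 1)) (p (EuclideanSpace.single j 1)) : ℝ)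
        = inner ℝ (EuclideanSpace.single j (1:ℝ)) (p (p (EuclideanSpace.single j 1))) := by
      exact Submodule.inner_starProjection_left_eq_right V _ _
    rw [e1, e2, hpid _ (hpmem _)]
    rw [EuclideanSpace.inner_single_left]
    simp [P]
  -- P * M = M
  have hPM : ∀ i j, ∑ k, P i k * M k j = M i j := by
    intro i j
    have hcol : (WithLp.toLp 2 (fun k => M k j) : EuclideanSpace ℝ (Fin F)) ∈ V := by
      refine ⟨(WithLp.equiv 2 (Fin d → ℝ)).symm (Ψ.mulVec (Pi.single j 1)), ?_⟩
      show (WithLp.equiv 2 (Fin F → ℝ)).symm (G.mulVec (Ψ.mulVec (Pi.single j 1))) = _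
      refine congrArg (WithLp.toLp 2) ?_
      funext k
      show ∑ a, G k a * (Ψ.mulVec (Pi.single j 1)) a = M k j
      simp [Matrix.mulVec, dotProduct, Pi.single_apply, mul_ite, hMdef, Matrix.mul_apply]
    have := hPapp (WithLp.toLp 2 (fun k => M k j) : EuclideanSpace ℝ (Fin F)) i
    rw [hpid _ hcol] at this
    exact this.symm
  -- main Cauchy–Schwarz chain
  have hchain : (∑ i, M i i) ^ 2
      ≤ (∑ i, ∑ j, P i j ^ 2) * (∑ i, ∑ j, M i j ^ 2) := by
    have e0 : ∑ i, M i i = ∑ x : Fin F × Fin F, P x.1 x.2 * M x.2 x.1 := by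
      rw [Fintype.sum_prod_type]
      exact Finset.sum_congr rfl fun i _ => (hPM i i).symm
    rw [e0]
    have := Finset.sum_mul_sq_le_sq_mul_sq Finset.univ
      (fun x : Fin F × Fin F => P x.1 x.2) (fun x => M x.2 x.1)
    refine this.trans (le_of_eq ?_)
    congr 1
    · rw [Fintype.sum_prod_type]
    · rw [Fintype.sum_prod_type, Finset.sum_comm]
  have hMsq_nonneg : (0:ℝ) ≤ ∑ i, ∑ j, M i j ^ 2 :=
    Finset.sum_nonneg fun i _ => Finset.sum_nonneg fun j _ => sq_nonneg _
  calc (∑ i, M i i) ^ 2 ≤ (∑ i, ∑ j, P i j ^ 2) * (∑ i, ∑ j, M i j ^ 2) := hchain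
    _ ≤ (d : ℝ) * ∑ i, ∑ j, M i j ^ 2 := by
        apply mul_le_mul_of_nonneg_right _ hMsq_nonneg
        rw [hPsq, htr]; exact hrank

theorem welch_floor (F d : ℕ) (hd : 1 ≤ d) (hdF : d < F)
    (Ψ : Matrix (Fin d) (Fin F) ℝ) (G : Matrix (Fin F) (Fin d) ℝ)
    (M : Matrix (Fin F) (Fin F) ℝ) (hM : M = G * Ψ)
    (hdiag : ∀ i, M i i = 1) :
    (((F : ℝ) - d) / (d * ((F : ℝ) - 1)) ≤
      (1 / ((F : ℝ) * ((F : ℝ) - 1))) *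
        ∑ i : Fin F, ∑ j ∈ univ.filter (fun j => j ≠ i), |M i j| ^ 2)
    ∧ ∃ i j : Fin F, i ≠ j ∧
        Real.sqrt (((F : ℝ) - d) / (d * ((F : ℝ) - 1))) ≤ |M i j| := by
  classical
  have hF2 : 2 ≤ F := lt_of_le_of_lt hd hdF
  have hFpos : (0:ℝ) < F := by positivity
  have hdpos : (0:ℝ) < d := by exact_mod_cast hd
  have hF1 : (0:ℝ) < (F:ℝ) - 1 := by
    have : (2:ℝ) ≤ F := by exact_mod_cast hF2
    linarith
  have hFd : (0:ℝ) ≤ (F:ℝ) - d := by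
    have : (d:ℝ) < F := by exact_mod_cast hdF
    linarith
  set c : ℝ := ((F : ℝ) - d) / (d * ((F : ℝ) - 1)) with hc
  have hc0 : 0 ≤ c := by positivity
  set S : ℝ := ∑ i : Fin F, ∑ j ∈ univ.filter (fun j => j ≠ i), |M i j| ^ 2 with hS
  -- total sum of squares
  have hsplit : ∑ i, ∑ j, M i j ^ 2 = (F:ℝ) + S := by
    have : ∀ i : Fin F, ∑ j, M i j ^ 2
        = 1 + ∑ j ∈ univ.filter (fun j => j ≠ i), |M i j| ^ 2 := by
      intro i
      rw [← Finset.sum_filter_add_sum_filter_not univ (fun j => j = i)]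
      congr 1
      · rw [Finset.filter_eq', if_pos (Finset.mem_univ i), Finset.sum_singleton, hdiag i]
        norm_num
      · exact Finset.sum_congr rfl fun j _ => (sq_abs _).symm
    simp_rw [this]
    rw [Finset.sum_add_distrib, Finset.sum_const, Finset.card_univ, Fintype.card_fin]
    simp [hS]
  have hkey := rank_trace_bound F d G Ψ
  rw [← hM] at hkey
  have htr : ∑ i, M i i = (F:ℝ) := by
    simp [hdiag, Finset.card_univ]
  rw [htr, hsplit] at hkey
  -- S ≥ F (F - d) / d
  have hSlb : (F:ℝ) * ((F:ℝ) - d) / d ≤ S := by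
    rw [div_le_iff₀ hdpos] at *
    nlinarith [hkey]
  have hbound : c * ((F:ℝ) * ((F:ℝ) - 1)) ≤ S := by
    have : c * ((F:ℝ) * ((F:ℝ) - 1)) = (F:ℝ) * ((F:ℝ) - d) / d := by
      field_simp [hc]
      rw [hc]
      field_simp
    rw [this]; exact hSlb
  have hpos : (0:ℝ) < (F:ℝ) * ((F:ℝ) - 1) := by positivity
  constructor
  · calc c = (1/((F:ℝ)*((F:ℝ)-1))) * (c * ((F:ℝ)*((F:ℝ)-1))) := by field_simp
      _ ≤ (1/((F:ℝ)*((F:ℝ)-1))) * S :=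
          mul_le_mul_of_nonneg_left hbound (by positivity)
  · by_contra hcon
    push_neg at hcon
    have hterm : ∀ i j : Fin F, j ≠ i → |M i j| ^ 2 < c := by
      intro i j hji
      have h1 := hcon i j hji.symm
      have h2 : |M i j| ^ 2 < Real.sqrt c ^ 2 :=
        pow_lt_pow_left₀ h1 (abs_nonneg _) two_ne_zero
      rwa [Real.sq_sqrt hc0] at h2
    haveI : Nonempty (Fin F) := ⟨⟨0, by omega⟩⟩
    have hlt : S < ∑ i : Fin F, ∑ j ∈ univ.filter (fun j => j ≠ i), c := by
      apply Finset.sum_lt_sum_of_nonempty Finset.univ_nonempty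
      intro i _
      apply Finset.sum_lt_sum_of_nonempty
      · obtain ⟨j, hj⟩ := Fintype.exists_ne_of_one_lt_card (by simp; omega) i
        exact ⟨j, Finset.mem_filter.2 ⟨Finset.mem_univ _, hj⟩⟩
      · intro j hj
        exact hterm i j (Finset.mem_filter.1 hj).2
    have hcard : ∀ i : Fin F, (univ.filter (fun j => j ≠ i)).card = F - 1 := by
      intro i
      rw [Finset.filter_ne', Finset.card_erase_of_mem (Finset.mem_univ i)]
      simp
    have hcount : ∑ i : Fin F, ∑ j ∈ univ.filter (fun j => j ≠ i), c
        = (F:ℝ) * (((F:ℝ) - 1) * c) := by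
      simp_rw [Finset.sum_const, hcard, nsmul_eq_mul, Finset.sum_const,
        Finset.card_univ, Fintype.card_fin, nsmul_eq_mul]
      rw [Nat.cast_sub (by omega : 1 ≤ F)]
      push_cast
      ring
    rw [hcount] at hlt
    nlinarith [hbound, hlt]
end

section
/- Let F > d, let y_1,…,y_F ∈ ℝ^d, and let G ∈ ℝ^{F×d} satisfy ‖G y_i − e_i‖_∞ ≤ δ for all i, where e_i is the i-th standard basis vector of ℝ^F and 0 ≤ δ < 1/2. Then δ/(1−δ) ≥ √((F−d)/(d(F−1))). -/
open Finset Matrix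

private lemma welch_algebra_aux (F d ε : ℝ) (hF2 : 2 ≤ F) (hd1 : 1 ≤ d) (hdF : d < F)
    (hε0 : 0 ≤ ε) (hkey : F ^ 2 ≤ (F * (1 + (F - 1) * ε ^ 2)) * d) :
    Real.sqrt ((F - d) / (d * (F - 1))) ≤ ε := by
  have h' : F - d ≤ d * (F - 1) * ε ^ 2 := by nlinarith [sq_nonneg ε]
  have hfrac : (F - d) / (d * (F - 1)) ≤ ε ^ 2 := by
    rw [div_le_iff₀ (by nlinarith)]
    nlinarith
  calc Real.sqrt ((F - d) / (d * (F - 1)))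
      ≤ Real.sqrt (ε ^ 2) := Real.sqrt_le_sqrt hfrac
    _ = ε := Real.sqrt_sq hε0

theorem no_better_than_welch_reset (F d : ℕ) (hd : 1 ≤ d) (hdF : d < F)
    (y : Fin F → (Fin d → ℝ)) (G : Matrix (Fin F) (Fin d) ℝ)
    (δ : ℝ) (hδ0 : 0 ≤ δ) (hδ : δ < 1 / 2)
    (happrox : ∀ i j, |G.mulVec (y i) j - (if j = i then (1 : ℝ) else 0)| ≤ δ) :
    Real.sqrt (((F : ℝ) - d) / (d * ((F : ℝ) - 1))) ≤ δ / (1 - δ) := by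
  classical
  set ε := δ / (1 - δ) with hεdef
  have h1δ : (0:ℝ) < 1 - δ := by linarith
  have hε0 : 0 ≤ ε := div_nonneg hδ0 h1δ.le
  set m : Fin F → ℝ := fun i => G.mulVec (y i) i with hmdef
  have hdiag : ∀ i, 1 - δ ≤ m i := by
    intro i
    have h := happrox i i
    rw [if_pos rfl] at h
    have := (abs_le.mp h).1
    simp only [hmdef]; linarith
  have hm0 : ∀ i, 0 < m i := fun i => lt_of_lt_of_le (by linarith) (hdiag i)
  set c : Fin F → EuclideanSpace ℝ (Fin F) :=
    fun i => WithLp.toLp 2 (fun j => G.mulVec (y i) j / m i) with hcdef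
  have hcii : ∀ i, c i i = 1 := fun i => div_self (hm0 i).ne'
  have hcoff : ∀ i j, j ≠ i → |c i j| ≤ ε := by
    intro i j hji
    have h := happrox i j
    rw [if_neg hji, sub_zero] at h
    have habs : |c i j| = |G.mulVec (y i) j| / m i := by
      rw [hcdef]; simp [abs_div, abs_of_pos (hm0 i)]
    rw [habs, hεdef]
    exact div_le_div₀ hδ0 h h1δ (hdiag i)
  set g : Fin d → EuclideanSpace ℝ (Fin F) := fun k => WithLp.toLp 2 (fun j => G j k) with hgdef
  set V : Submodule ℝ (EuclideanSpace ℝ (Fin F)) := Submodule.span ℝ (Set.range g) with hVdef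
  have hVr : Module.finrank ℝ V ≤ d := by
    refine (finrank_span_le_card _).trans ?_
    rw [Set.toFinset_range]
    exact Finset.card_image_le.trans (by simp)
  have hcV : ∀ i, c i ∈ V := by
    intro i
    have hrepr : c i = ∑ k, ((y i k) / m i) • g k := by
      ext j
      have h1 : (∑ k, ((y i k) / m i) • g k) j = ∑ k, (y i k / m i) * G j k := by
        rw [WithLp.ofLp_sum, Finset.sum_apply]; rfl
      rw [h1, hcdef]
      simp only [WithLp.ofLp_toLp, mulVec, dotProduct]
      rw [Finset.sum_div]
      congr 1; funext k; ring
    rw [hrepr]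
    exact Submodule.sum_mem _ fun k _ =>
      Submodule.smul_mem _ _ (Submodule.subset_span ⟨k, rfl⟩)
  set r := Module.finrank ℝ V with hrdef
  let b := stdOrthonormalBasis ℝ V
  set u : Fin r → EuclideanSpace ℝ (Fin F) := fun j => (b j : EuclideanSpace ℝ (Fin F)) with hudef
  have hu : Orthonormal ℝ u := by
    constructor
    · intro j
      have := b.orthonormal.1 j
      rwa [show ‖u j‖ = ‖b j‖ from rfl]
    · intro j k hjk
      have := b.orthonormal.2 hjk
      rwa [show (inner ℝ (u j) (u k) : ℝ) = inner ℝ (b j) (b k) from rfl]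
  set a : Fin F → Fin r → ℝ := fun i j => (inner ℝ (u j) (c i) : ℝ) with hadef
  have hexp : ∀ i, c i = ∑ j, a i j • u j := by
    intro i
    have h1 : (∑ j, b.repr ⟨c i, hcV i⟩ j • b j) = (⟨c i, hcV i⟩ : V) := b.sum_repr _
    calc c i = ((∑ j, b.repr ⟨c i, hcV i⟩ j • b j : V) : EuclideanSpace ℝ (Fin F)) := by
          rw [h1]
      _ = ∑ j, a i j • u j := by
          rw [Submodule.coe_sum]
          congr 1; funext j
          rw [Submodule.coe_smul]
          congr 1
          rw [b.repr_apply_apply]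
          rfl
  have hFeq : (F:ℝ) = ∑ i, ∑ j, a i j * u j i := by
    have h1 : (F:ℝ) = ∑ i : Fin F, c i i := by simp [hcii]
    rw [h1]
    congr 1; funext i
    conv_lhs => rw [hexp i]
    rw [show ((∑ j, a i j • u j) i) = ∑ j, (a i j • u j) i by rw [WithLp.ofLp_sum, Finset.sum_apply]]
    rfl
  have hCS : ((F:ℝ))^2 ≤ (∑ p : Fin F × Fin r, a p.1 p.2 ^ 2) *
      (∑ p : Fin F × Fin r, (u p.2 p.1) ^ 2) := by
    have h := Finset.sum_mul_sq_le_sq_mul_sq Finset.univ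
      (fun p : Fin F × Fin r => a p.1 p.2) (fun p : Fin F × Fin r => u p.2 p.1)
    calc ((F:ℝ))^2 = (∑ p : Fin F × Fin r, a p.1 p.2 * u p.2 p.1)^2 := by
          rw [hFeq, Fintype.sum_prod_type]
      _ ≤ _ := h
  have hnormc : ∀ i, ‖c i‖^2 ≤ 1 + ((F:ℝ) - 1) * ε^2 := by
    intro i
    have h1 : ‖c i‖^2 = ∑ j, (c i j)^2 := by
      rw [EuclideanSpace.norm_eq, Real.sq_sqrt (by positivity)]
      simp [Real.norm_eq_abs, sq_abs]
    rw [h1, ← Finset.add_sum_erase _ _ (Finset.mem_univ i), hcii, one_pow]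
    have hcard : ((Finset.univ.erase i).card : ℝ) = (F:ℝ) - 1 := by
      rw [Finset.card_erase_of_mem (Finset.mem_univ i), Finset.card_univ, Fintype.card_fin]
      have h1F : 1 ≤ F := by omega
      push_cast [Nat.cast_sub h1F]
      ring
    have h2 : ∑ j ∈ Finset.univ.erase i, (c i j)^2 ≤ ((F:ℝ) - 1) * ε^2 := by
      calc ∑ j ∈ Finset.univ.erase i, (c i j)^2
          ≤ ∑ _j ∈ Finset.univ.erase i, ε^2 := by
            refine Finset.sum_le_sum fun j hj => ?_
            have hb := hcoff i j (Finset.ne_of_mem_erase hj)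
            nlinarith [abs_nonneg (c i j), sq_abs (c i j)]
        _ = ((Finset.univ.erase i).card : ℝ) * ε^2 := by
            rw [Finset.sum_const, nsmul_eq_mul]
        _ = ((F:ℝ) - 1) * ε^2 := by rw [hcard]
    linarith
  have hasum : (∑ p : Fin F × Fin r, a p.1 p.2 ^ 2) ≤ (F:ℝ) * (1 + ((F:ℝ)-1) * ε^2) := by
    rw [Fintype.sum_prod_type]
    calc ∑ i, ∑ j, a i j ^ 2 ≤ ∑ i : Fin F, ‖c i‖^2 := by
          refine Finset.sum_le_sum fun i _ => ?_
          have hB := hu.sum_inner_products_le (c i) (s := Finset.univ)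
          simpa [hadef, Real.norm_eq_abs, sq_abs] using hB
      _ ≤ ∑ _i : Fin F, (1 + ((F:ℝ)-1)*ε^2) := Finset.sum_le_sum fun i _ => hnormc i
      _ = (F:ℝ) * (1 + ((F:ℝ)-1)*ε^2) := by
          rw [Finset.sum_const, nsmul_eq_mul, Finset.card_univ, Fintype.card_fin]
  have husum : (∑ p : Fin F × Fin r, (u p.2 p.1) ^ 2) ≤ (d:ℝ) := by
    have h1 : (∑ p : Fin F × Fin r, (u p.2 p.1) ^ 2) = ∑ j, ∑ i, (u j i)^2 := by
      rw [Fintype.sum_prod_type, Finset.sum_comm]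
    rw [h1]
    have h2 : ∀ j, ∑ i, (u j i)^2 = 1 := by
      intro j
      have hn := hu.1 j
      have h3 : ‖u j‖^2 = ∑ i, (u j i)^2 := by
        rw [EuclideanSpace.norm_eq, Real.sq_sqrt (by positivity)]
        simp [Real.norm_eq_abs, sq_abs]
      rw [← h3, hn, one_pow]
    rw [Finset.sum_congr rfl (fun j _ => h2 j), Finset.sum_const, nsmul_eq_mul,
      Finset.card_univ, Fintype.card_fin, mul_one]
    exact_mod_cast hVr
  have hF2 : (2:ℝ) ≤ (F:ℝ) := by exact_mod_cast (by omega : 2 ≤ F)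
  have hd1 : (1:ℝ) ≤ (d:ℝ) := by exact_mod_cast hd
  have hdF' : (d:ℝ) < (F:ℝ) := by exact_mod_cast hdF
  have he2 : (0:ℝ) ≤ ((F:ℝ)-1)*ε^2 := mul_nonneg (by linarith) (sq_nonneg _)
  have hkey : ((F:ℝ))^2 ≤ ((F:ℝ) * (1 + ((F:ℝ)-1)*ε^2)) * d := by
    refine hCS.trans ?_
    refine mul_le_mul hasum husum (Finset.sum_nonneg fun p _ => sq_nonneg _)
      (mul_nonneg (by linarith) (by linarith))
  exact welch_algebra_aux _ _ _ hF2 hd1 hdF' hε0 hkey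
end
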